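/- arXiv:2604.10423 — 5 statements merged into one kernel-verified Lean document; each statement's English description precedes it below -/
import Mathlib

section
/- Let m ∈ ℕ, θ ∈ (1/4, 3/4), and let a₀, …, a_m ∈ [0,1]. Define p(θ) = Σ_{j=0}^m a_j · C(m,j) · θ^j (1−θ)^{m−j}. Then |p'(θ)| ≤ 6 · E[|X − mθ|] where X ~ Binomial(m, θ), and consequently |p'(θ)| ≤ 6·√(m θ(1−θ)) ≤ 3√m. -/
open Finset

private lemma aux_pow_pred (j : ℕ) (x : ℝ) : x * ((j : ℝ) * x ^ (j - 1)) = (j : ℝ) * x ^ j := by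
  cases j with
  | zero => simp
  | succ n => simp only [Nat.add_sub_cancel]; rw [pow_succ]; ring

/-- Derivative bound for the acceptance-probability polynomial
p(θ) = Σ_j a_j C(m,j) θ^j (1−θ)^{m−j} with coefficients a_j ∈ [0,1] and θ ∈ (1/4, 3/4):
|p'(θ)| ≤ 6·E|X − mθ| for X ~ Binomial(m,θ), hence |p'(θ)| ≤ 6√(mθ(1−θ)) ≤ 3√m. -/
theorem stmt_4 (m : ℕ) (θ : ℝ) (hθ1 : 1/4 < θ) (hθ2 : θ < 3/4)
    (a : ℕ → ℝ) (ha : ∀ j, 0 ≤ a j ∧ a j ≤ 1) :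
    |deriv (fun x : ℝ =>
        ∑ j ∈ range (m + 1), a j * (m.choose j : ℝ) * x ^ j * (1 - x) ^ (m - j)) θ|
        ≤ 6 * ∑ j ∈ range (m + 1),
            (m.choose j : ℝ) * θ ^ j * (1 - θ) ^ (m - j) * |(j : ℝ) - m * θ| ∧
    |deriv (fun x : ℝ =>
        ∑ j ∈ range (m + 1), a j * (m.choose j : ℝ) * x ^ j * (1 - x) ^ (m - j)) θ|
        ≤ 6 * Real.sqrt (m * θ * (1 - θ)) ∧
    |deriv (fun x : ℝ =>
        ∑ j ∈ range (m + 1), a j * (m.choose j : ℝ) * x ^ j * (1 - x) ^ (m - j)) θ|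
        ≤ 3 * Real.sqrt m := by
  have hθ0 : 0 < θ := by linarith
  have hθ1' : 0 < 1 - θ := by linarith
  have hs : (3:ℝ)/16 < θ * (1 - θ) := by nlinarith
  -- derivative computation
  have hD : ∀ j ∈ range (m + 1),
      HasDerivAt (fun x : ℝ => a j * (m.choose j : ℝ) * x ^ j * (1 - x) ^ (m - j))
        (a j * (m.choose j : ℝ) * ((j : ℝ) * θ ^ (j - 1)) * (1 - θ) ^ (m - j)
          + a j * (m.choose j : ℝ) * θ ^ j *
            (((m - j : ℕ) : ℝ) * (1 - θ) ^ (m - j - 1) * (-1))) θ := by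
    intro j hj
    have h1 : HasDerivAt (fun x : ℝ => (1 - x) ^ (m - j))
        (((m - j : ℕ) : ℝ) * (1 - θ) ^ (m - j - 1) * (-1)) θ := by
      have := ((hasDerivAt_id θ).const_sub 1).fun_pow (m - j)
      simpa using this
    have h2 := (hasDerivAt_pow j θ).const_mul (a j * (m.choose j : ℝ))
    exact h2.mul h1
  have hderiv : deriv (fun x : ℝ =>
      ∑ j ∈ range (m + 1), a j * (m.choose j : ℝ) * x ^ j * (1 - x) ^ (m - j)) θ
      = ∑ j ∈ range (m + 1),
        (a j * (m.choose j : ℝ) * ((j : ℝ) * θ ^ (j - 1)) * (1 - θ) ^ (m - j)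
          + a j * (m.choose j : ℝ) * θ ^ j *
            (((m - j : ℕ) : ℝ) * (1 - θ) ^ (m - j - 1) * (-1))) :=
    (HasDerivAt.fun_sum hD).deriv
  -- termwise bound
  have key : ∀ j ∈ range (m + 1),
      |a j * (m.choose j : ℝ) * ((j : ℝ) * θ ^ (j - 1)) * (1 - θ) ^ (m - j)
        + a j * (m.choose j : ℝ) * θ ^ j *
          (((m - j : ℕ) : ℝ) * (1 - θ) ^ (m - j - 1) * (-1))|
      ≤ 6 * ((m.choose j : ℝ) * θ ^ j * (1 - θ) ^ (m - j) * |(j : ℝ) - m * θ|) := by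
    intro j hj
    have hjm : j ≤ m := Nat.lt_succ_iff.mp (mem_range.mp hj)
    set D : ℝ := (j : ℝ) * θ ^ (j - 1) * (1 - θ) ^ (m - j)
      - θ ^ j * (((m - j : ℕ) : ℝ) * (1 - θ) ^ (m - j - 1)) with hDdef
    have hid : θ * (1 - θ) * D = θ ^ j * (1 - θ) ^ (m - j) * ((j : ℝ) - m * θ) := by
      have e1 : θ * ((j : ℝ) * θ ^ (j - 1)) = (j : ℝ) * θ ^ j := aux_pow_pred j θ
      have e2 : (1 - θ) * (((m - j : ℕ) : ℝ) * (1 - θ) ^ (m - j - 1))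
          = ((m - j : ℕ) : ℝ) * (1 - θ) ^ (m - j) := aux_pow_pred (m - j) (1 - θ)
      have e3 : ((m - j : ℕ) : ℝ) = (m : ℝ) - (j : ℝ) := by
        rw [Nat.cast_sub hjm]
      have : θ * (1 - θ) * D
          = (1 - θ) * (θ * ((j : ℝ) * θ ^ (j - 1))) * (1 - θ) ^ (m - j)
            - θ * θ ^ j * ((1 - θ) * (((m - j : ℕ) : ℝ) * (1 - θ) ^ (m - j - 1))) := by
        rw [hDdef]; ring
      rw [this, e1, e2, e3]; ring
    have habs : θ * (1 - θ) * |D| = θ ^ j * (1 - θ) ^ (m - j) * |(j : ℝ) - m * θ| := by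
      have h := congrArg abs hid
      simp only [abs_mul] at h
      rw [abs_of_pos hθ0, abs_of_pos hθ1', abs_of_pos (pow_pos hθ0 j),
        abs_of_pos (pow_pos hθ1' (m - j))] at h
      exact h
    have hDle : |D| ≤ 6 * (θ ^ j * (1 - θ) ^ (m - j) * |(j : ℝ) - m * θ|) := by
      nlinarith [abs_nonneg D, habs, hs]
    have ha0 := (ha j).1
    have ha1 := (ha j).2
    have hc0 : (0:ℝ) ≤ (m.choose j : ℝ) := Nat.cast_nonneg _
    calc |a j * (m.choose j : ℝ) * ((j : ℝ) * θ ^ (j - 1)) * (1 - θ) ^ (m - j)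
        + a j * (m.choose j : ℝ) * θ ^ j *
          (((m - j : ℕ) : ℝ) * (1 - θ) ^ (m - j - 1) * (-1))|
        = |a j| * ((m.choose j : ℝ) * |D|) := by
          rw [show a j * (m.choose j : ℝ) * ((j : ℝ) * θ ^ (j - 1)) * (1 - θ) ^ (m - j)
            + a j * (m.choose j : ℝ) * θ ^ j *
              (((m - j : ℕ) : ℝ) * (1 - θ) ^ (m - j - 1) * (-1))
            = a j * ((m.choose j : ℝ) * D) by rw [hDdef]; ring]
          rw [abs_mul, abs_mul, abs_of_nonneg hc0]
      _ ≤ 1 * ((m.choose j : ℝ) * (6 * (θ ^ j * (1 - θ) ^ (m - j) * |(j : ℝ) - m * θ|))) := by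
          apply mul_le_mul (by rw [abs_of_nonneg ha0]; exact ha1)
            (mul_le_mul_of_nonneg_left hDle hc0)
            (by positivity) one_pos.le
      _ = 6 * ((m.choose j : ℝ) * θ ^ j * (1 - θ) ^ (m - j) * |(j : ℝ) - m * θ|) := by ring
  -- first bound
  have h1 : |deriv (fun x : ℝ =>
      ∑ j ∈ range (m + 1), a j * (m.choose j : ℝ) * x ^ j * (1 - x) ^ (m - j)) θ|
      ≤ 6 * ∑ j ∈ range (m + 1),
          (m.choose j : ℝ) * θ ^ j * (1 - θ) ^ (m - j) * |(j : ℝ) - m * θ| := by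
    rw [hderiv, Finset.mul_sum]
    exact (Finset.abs_sum_le_sum_abs _ _).trans (Finset.sum_le_sum key)
  -- moments
  have hsum1 : ∑ j ∈ range (m + 1), (m.choose j : ℝ) * θ ^ j * (1 - θ) ^ (m - j) = 1 := by
    have h := congrArg (Polynomial.eval θ) (bernsteinPolynomial.sum (R := ℝ) m)
    simpa [bernsteinPolynomial, Polynomial.eval_finset_sum] using h
  have hvar : ∑ j ∈ range (m + 1),
      (m.choose j : ℝ) * θ ^ j * (1 - θ) ^ (m - j) * ((j : ℝ) - m * θ) ^ 2
      = m * θ * (1 - θ) := by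
    have h := congrArg (Polynomial.eval θ) (bernsteinPolynomial.variance (R := ℝ) m)
    simp only [Polynomial.eval_finset_sum, Polynomial.eval_mul, Polynomial.eval_pow,
      Polynomial.eval_sub, Polynomial.eval_smul, Polynomial.eval_X, Polynomial.eval_natCast,
      Polynomial.eval_one, bernsteinPolynomial, smul_eq_mul, nsmul_eq_mul] at h
    rw [← h]
    exact Finset.sum_congr rfl fun j hj => by ring
  -- Cauchy-Schwarz
  have hCS : ∑ j ∈ range (m + 1),
      (m.choose j : ℝ) * θ ^ j * (1 - θ) ^ (m - j) * |(j : ℝ) - m * θ|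
      ≤ Real.sqrt (m * θ * (1 - θ)) := by
    have hw : ∀ j, (0:ℝ) ≤ (m.choose j : ℝ) * θ ^ j * (1 - θ) ^ (m - j) := by
      intro j; positivity
    have heq : ∀ j ∈ range (m + 1),
        (m.choose j : ℝ) * θ ^ j * (1 - θ) ^ (m - j) * |(j : ℝ) - m * θ|
        = Real.sqrt ((m.choose j : ℝ) * θ ^ j * (1 - θ) ^ (m - j))
          * Real.sqrt ((m.choose j : ℝ) * θ ^ j * (1 - θ) ^ (m - j)
              * ((j : ℝ) - m * θ) ^ 2) := by
      intro j _
      rw [Real.sqrt_mul (hw j), Real.sqrt_sq_eq_abs, ← mul_assoc,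
        Real.mul_self_sqrt (hw j)]
    rw [Finset.sum_congr rfl heq]
    calc _ ≤ Real.sqrt (∑ j ∈ range (m + 1), (m.choose j : ℝ) * θ ^ j * (1 - θ) ^ (m - j))
          * Real.sqrt (∑ j ∈ range (m + 1),
              (m.choose j : ℝ) * θ ^ j * (1 - θ) ^ (m - j) * ((j : ℝ) - m * θ) ^ 2) :=
        Real.sum_sqrt_mul_sqrt_le _ hw (fun j => by positivity)
      _ = Real.sqrt (m * θ * (1 - θ)) := by rw [hsum1, hvar, Real.sqrt_one, one_mul]
  have h2 : |deriv (fun x : ℝ =>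
      ∑ j ∈ range (m + 1), a j * (m.choose j : ℝ) * x ^ j * (1 - x) ^ (m - j)) θ|
      ≤ 6 * Real.sqrt (m * θ * (1 - θ)) :=
    h1.trans (by linarith)
  refine ⟨h1, h2, h2.trans ?_⟩
  -- 6√(mθ(1-θ)) ≤ 3√m
  have hle : (m : ℝ) * θ * (1 - θ) ≤ (m : ℝ) * (1/4) := by
    have : θ * (1 - θ) ≤ 1/4 := by nlinarith [sq_nonneg (θ - 1/2)]
    have hm : (0:ℝ) ≤ m := Nat.cast_nonneg m
    calc (m : ℝ) * θ * (1 - θ) = (m : ℝ) * (θ * (1 - θ)) := by ring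
      _ ≤ (m : ℝ) * (1/4) := mul_le_mul_of_nonneg_left this hm
  calc 6 * Real.sqrt ((m : ℝ) * θ * (1 - θ)) ≤ 6 * Real.sqrt ((m : ℝ) * (1/4)) := by
        exact mul_le_mul_of_nonneg_left (Real.sqrt_le_sqrt hle) (by norm_num)
    _ = 3 * Real.sqrt m := by
        rw [Real.sqrt_mul (Nat.cast_nonneg m), show Real.sqrt (1/4) = 1/2 by
          rw [show (1:ℝ)/4 = (1/2)^2 by norm_num, Real.sqrt_sq (by norm_num)]]
        ring
end

section
/- Let P, Q be probability distributions on a countable set Y such that for all events O: e^{−ε}(Q(O) − δ) ≤ P(O) ≤ e^{ε} Q(O) + δ, with ε > 0 and δ ≥ 0. Define E = { y : |ln(P(y)/Q(y))| ≤ 2ε }. Then P(E) ≥ 1 − 2δ/(1 − e^{−ε}). -/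
open scoped ENNReal

lemma aux_fin {Y : Type*} (R : PMF Y) (s : Set Y) : R.toOuterMeasure s ≠ ⊤ := by
  have h1 : R.toOuterMeasure s ≤ R.toOuterMeasure Set.univ := R.toOuterMeasure.mono (Set.subset_univ s)
  have h2 : R.toOuterMeasure Set.univ = 1 := by
    rw [PMF.toOuterMeasure_apply]; simpa using R.tsum_coe
  exact ((h1.trans_eq h2).trans_lt ENNReal.one_lt_top).ne

lemma aux_comp {Y : Type*} (P Q : PMF Y) (s : Set Y) (c : ℝ) (hc : 0 ≤ c)
    (hpt : ∀ y ∈ s, (P y).toReal ≤ c * (Q y).toReal) :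
    (P.toOuterMeasure s).toReal ≤ c * (Q.toOuterMeasure s).toReal := by
  have hle : P.toOuterMeasure s ≤ ENNReal.ofReal c * Q.toOuterMeasure s := by
    rw [PMF.toOuterMeasure_apply, PMF.toOuterMeasure_apply, ← ENNReal.tsum_mul_left]
    refine ENNReal.tsum_le_tsum fun y => ?_
    by_cases hy : y ∈ s
    · simp only [Set.indicator_of_mem hy]
      have hP : P y = ENNReal.ofReal (P y).toReal := (ENNReal.ofReal_toReal (PMF.apply_ne_top P y)).symm
      have hQ : Q y = ENNReal.ofReal (Q y).toReal := (ENNReal.ofReal_toReal (PMF.apply_ne_top Q y)).symm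
      rw [hP, hQ, ← ENNReal.ofReal_mul hc]
      exact ENNReal.ofReal_le_ofReal (hpt y hy)
    · simp [Set.indicator_of_notMem hy]
  have hne : Q.toOuterMeasure s ≠ ⊤ := aux_fin Q s
  calc (P.toOuterMeasure s).toReal ≤ (ENNReal.ofReal c * Q.toOuterMeasure s).toReal := by
        apply ENNReal.toReal_mono _ hle
        exact ENNReal.mul_ne_top ENNReal.ofReal_ne_top hne
    _ = c * (Q.toOuterMeasure s).toReal := by
        rw [ENNReal.toReal_mul, ENNReal.toReal_ofReal hc]

/-- If P ≈_{ε,δ} Q (two-sided multiplicative-additive indistinguishability on all events),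
then the set E of outcomes with |ln(P(y)/Q(y))| ≤ 2ε satisfies P(E) ≥ 1 − 2δ/(1 − e^{−ε}). -/
theorem stmt_6 {Y : Type*} [Countable Y] (P Q : PMF Y) (ε δ : ℝ) (hε : 0 < ε) (hδ : 0 ≤ δ)
    (h : ∀ O : Set Y,
      Real.exp (-ε) * ((Q.toOuterMeasure O).toReal - δ) ≤ (P.toOuterMeasure O).toReal ∧
      (P.toOuterMeasure O).toReal ≤ Real.exp ε * (Q.toOuterMeasure O).toReal + δ) :
    1 - 2 * δ / (1 - Real.exp (-ε)) ≤
      (P.toOuterMeasure {y | |Real.log ((P y).toReal / (Q y).toReal)| ≤ 2 * ε}).toReal := by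
  set E : Set Y := {y | |Real.log ((P y).toReal / (Q y).toReal)| ≤ 2 * ε} with hE
  set A : Set Y := {y | 2 * ε < Real.log ((P y).toReal / (Q y).toReal)} with hA
  set B : Set Y := {y | Real.log ((P y).toReal / (Q y).toReal) < -(2 * ε)} with hB
  have hexp1 : Real.exp (-ε) < 1 := Real.exp_lt_one_iff.2 (by linarith)
  have hden : 0 < 1 - Real.exp (-ε) := by linarith
  -- nonnegativity / finiteness
  have hfin : ∀ (R : PMF Y) (s : Set Y), R.toOuterMeasure s ≠ ⊤ := aux_fin
  have hnn : ∀ (R : PMF Y) (s : Set Y), 0 ≤ (R.toOuterMeasure s).toReal := fun R s =>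
    ENNReal.toReal_nonneg
  -- pointwise bound on A : Q y ≤ exp(-2ε) P y
  have hcompA : (Q.toOuterMeasure A).toReal
      ≤ Real.exp (-(2*ε)) * (P.toOuterMeasure A).toReal := by
    refine aux_comp Q P A _ (Real.exp_nonneg _) fun y hy => ?_
    have hy' : 2 * ε < Real.log ((P y).toReal / (Q y).toReal) := hy
    set p := (P y).toReal; set q := (Q y).toReal
    have hq0 : 0 ≤ q := ENNReal.toReal_nonneg
    have hp0 : 0 ≤ p := ENNReal.toReal_nonneg
    have hpos : 0 < p / q := by
      by_contra hc
      push_neg at hc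
      have : p / q = 0 := le_antisymm hc (div_nonneg hp0 hq0)
      rw [this, Real.log_zero] at hy'; linarith
    have := (Real.lt_log_iff_exp_lt hpos).1 hy'
    have hqpos : 0 < q := by
      rcases lt_or_eq_of_le hq0 with h1 | h1
      · exact h1
      · exfalso; rw [← h1, div_zero] at hpos; linarith
    have hgt : Real.exp (2*ε) * q < p := by
      rwa [← lt_div_iff₀ hqpos]
    have : q < Real.exp (-(2*ε)) * p := by
      rw [Real.exp_neg]
      rw [lt_inv_mul_iff₀ (Real.exp_pos _)] at *
      linarith [hgt]
    linarith
  -- pointwise bound on B : P y ≤ exp(-2ε) Q y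
  have hcompB : (P.toOuterMeasure B).toReal
      ≤ Real.exp (-(2*ε)) * (Q.toOuterMeasure B).toReal := by
    refine aux_comp P Q B _ (Real.exp_nonneg _) fun y hy => ?_
    have hy' : Real.log ((P y).toReal / (Q y).toReal) < -(2*ε) := hy
    set p := (P y).toReal; set q := (Q y).toReal
    have hq0 : 0 ≤ q := ENNReal.toReal_nonneg
    have hp0 : 0 ≤ p := ENNReal.toReal_nonneg
    have hpos : 0 < p / q := by
      by_contra hc
      push_neg at hc
      have : p / q = 0 := le_antisymm hc (div_nonneg hp0 hq0)
      rw [this, Real.log_zero] at hy'; linarith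
    have hqpos : 0 < q := by
      rcases lt_or_eq_of_le hq0 with h1 | h1
      · exact h1
      · exfalso; rw [← h1, div_zero] at hpos; linarith
    have := (Real.log_lt_iff_lt_exp hpos).1 hy'
    have : p < Real.exp (-(2*ε)) * q := by
      rw [div_lt_iff₀ hqpos] at this; linarith
    linarith
  set a := (P.toOuterMeasure A).toReal
  set b := (P.toOuterMeasure B).toReal
  set e := (P.toOuterMeasure E).toReal
  set qa := (Q.toOuterMeasure A).toReal
  set qb := (Q.toOuterMeasure B).toReal
  have hexp2 : Real.exp ε * Real.exp (-(2*ε)) = Real.exp (-ε) := by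
    rw [← Real.exp_add]; ring_nf
  -- bound a
  have hAbound : a ≤ δ / (1 - Real.exp (-ε)) := by
    have h1 := (h A).2
    have h2 : Real.exp ε * qa ≤ Real.exp ε * (Real.exp (-(2*ε)) * a) :=
      mul_le_mul_of_nonneg_left hcompA (Real.exp_nonneg _)
    rw [← mul_assoc, hexp2] at h2
    have : a * (1 - Real.exp (-ε)) ≤ δ := by nlinarith
    rw [le_div_iff₀ hden]; linarith
  -- bound b
  have hBbound : b ≤ δ / (1 - Real.exp (-ε)) := by
    have h1 := (h B).1
    have hqbb : qb * (1 - Real.exp (-ε)) ≤ δ := by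
      have hepos := Real.exp_pos (-ε)
      have key : Real.exp (-ε) * (qb - δ) ≤ Real.exp (-(2*ε)) * qb := le_trans h1 hcompB
      have : Real.exp (-(2*ε)) = Real.exp (-ε) * Real.exp (-ε) := by
        rw [← Real.exp_add]; ring_nf
      rw [this] at key
      nlinarith [hnn Q B]
    have hqb : qb ≤ δ / (1 - Real.exp (-ε)) := by rw [le_div_iff₀ hden]; linarith
    have : Real.exp (-(2*ε)) * qb ≤ qb := by
      nlinarith [Real.exp_le_one_iff.2 (by linarith : -(2*ε) ≤ 0), hnn Q B]
    linarith [hcompB]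
  -- cover : univ ⊆ E ∪ A ∪ B
  have hcover : (Set.univ : Set Y) ⊆ E ∪ A ∪ B := by
    intro y _
    rcases le_or_gt (|Real.log ((P y).toReal / (Q y).toReal)|) (2*ε) with hle | hlt
    · exact Or.inl (Or.inl hle)
    · rcases lt_abs.mp hlt with h1 | h1
      · exact Or.inl (Or.inr h1)
      · exact Or.inr (by simp only [hB, Set.mem_setOf_eq]; linarith)
  have huniv : P.toOuterMeasure Set.univ = 1 := by
    rw [PMF.toOuterMeasure_apply]
    simpa using P.tsum_coe
  have hsub : (1:ℝ) ≤ e + a + b := by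
    have h1 : P.toOuterMeasure Set.univ ≤ P.toOuterMeasure (E ∪ A ∪ B) :=
      P.toOuterMeasure.mono hcover
    have h2 : P.toOuterMeasure (E ∪ A ∪ B)
        ≤ P.toOuterMeasure E + P.toOuterMeasure A + P.toOuterMeasure B :=
      le_trans (MeasureTheory.measure_union_le _ _)
        (add_le_add_left (MeasureTheory.measure_union_le _ _) _)
    have h3 : (1:ℝ≥0∞) ≤ P.toOuterMeasure E + P.toOuterMeasure A + P.toOuterMeasure B :=
      huniv ▸ le_trans h1 h2
    have hne : P.toOuterMeasure E + P.toOuterMeasure A + P.toOuterMeasure B ≠ ⊤ := by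
      simp [ENNReal.add_ne_top, hfin]
    have := ENNReal.toReal_mono hne h3
    simpa [ENNReal.toReal_add, hfin, e, a, b] using this
  have : 2 * δ / (1 - Real.exp (-ε)) = δ / (1 - Real.exp (-ε)) + δ / (1 - Real.exp (-ε)) := by
    ring
  rw [this]
  linarith
end

section
/- Let P, Q be probability distributions on a countable set Y, let ε ∈ (0,1], and let E ⊆ Y be a set on which |ln(P(y)/Q(y))| ≤ 2ε for all y ∈ E. Suppose P(E) ≥ 1 − d for some d ∈ [0, 1). Then Σ_{y ∈ E} P(y | E) · ln(P(y)/Q(y)) ≤ Σ_{y ∈ E} Q(y) · ln(P(y)/Q(y)) + 2ε(e^{2ε}/(1 − d) − 1). -/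
/-- Conditional-vs-oracle weighted log-ratio bound: if |ln(P(y)/Q(y))| ≤ 2ε on E and
P(E) ≥ 1 − d, then Σ_{y∈E} P(y|E) ln(P(y)/Q(y)) ≤ Σ_{y∈E} Q(y) ln(P(y)/Q(y))
+ 2ε(e^{2ε}/(1−d) − 1). -/
theorem stmt_7 {Y : Type*} [Countable Y] (P Q : PMF Y) (ε : ℝ) (hε0 : 0 < ε) (hε1 : ε ≤ 1)
    (E : Set Y) (hE : ∀ y ∈ E, |Real.log ((P y).toReal / (Q y).toReal)| ≤ 2 * ε)
    (d : ℝ) (hd0 : 0 ≤ d) (hd1 : d < 1)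
    (hPE : 1 - d ≤ (P.toOuterMeasure E).toReal) :
    ∑' y : E, ((P (y : Y)).toReal / (P.toOuterMeasure E).toReal) *
        Real.log ((P (y : Y)).toReal / (Q (y : Y)).toReal)
      ≤ (∑' y : E, (Q (y : Y)).toReal *
            Real.log ((P (y : Y)).toReal / (Q (y : Y)).toReal))
        + 2 * ε * (Real.exp (2 * ε) / (1 - d) - 1) := by
  classical
  set pE := (P.toOuterMeasure E).toReal with hpEdef
  clear_value pE
  have hd1' : 0 < 1 - d := by linarith
  have hpE0 : 0 < pE := lt_of_lt_of_le hd1' hPE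
  have hpE1 : pE ≤ 1 := by
    have h1 : P.toOuterMeasure E ≤ 1 := by
      rw [P.toOuterMeasure_apply]
      calc ∑' x, E.indicator (⇑P) x ≤ ∑' x, P x :=
            ENNReal.tsum_le_tsum (fun x => Set.indicator_le_self E _ x)
        _ = 1 := P.tsum_coe
    rw [hpEdef]
    calc (P.toOuterMeasure E).toReal ≤ (1 : ENNReal).toReal :=
        ENNReal.toReal_mono ENNReal.one_ne_top h1
      _ = 1 := by simp
  set C : ℝ := Real.exp (2 * ε) / (1 - d) - 1 with hCdef
  clear_value C
  have hexp1 : 1 ≤ Real.exp (2 * ε) := Real.one_le_exp (by linarith)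
  have hexpd : Real.exp (2 * ε) ≤ Real.exp (2 * ε) / (1 - d) := by
    rw [le_div_iff₀ hd1']
    nlinarith [Real.exp_pos (2 * ε)]
  have hC0 : 0 ≤ C := by rw [hCdef]; linarith
  have hC1 : 1 - Real.exp (-(2 * ε)) ≤ C := by
    rw [hCdef, Real.exp_neg]
    have ht : (0:ℝ) < Real.exp (2 * ε) := Real.exp_pos _
    have : Real.exp (2 * ε) + (Real.exp (2 * ε))⁻¹ ≥ 2 := by
      rw [ge_iff_le, ← sub_nonneg]
      have : Real.exp (2 * ε) + (Real.exp (2 * ε))⁻¹ - 2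
          = (Real.exp (2 * ε) - 1)^2 / Real.exp (2 * ε) := by
        field_simp; ring
      rw [this]
      positivity
    linarith
  -- summability facts
  have hPsum : Summable (fun y : Y => (P y).toReal) :=
    ENNReal.summable_toReal (by rw [P.tsum_coe]; exact ENNReal.one_ne_top)
  have hQsum : Summable (fun y : Y => (Q y).toReal) :=
    ENNReal.summable_toReal (by rw [Q.tsum_coe]; exact ENNReal.one_ne_top)
  have hPsumE : Summable (fun y : E => (P (y : Y)).toReal) := hPsum.subtype E
  have hQsumE : Summable (fun y : E => (Q (y : Y)).toReal) := hQsum.subtype E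
  have hlogbound : ∀ y : E, |Real.log ((P (y : Y)).toReal / (Q (y : Y)).toReal)| ≤ 2 * ε :=
    fun y => hE y y.2
  have hsumA : Summable (fun y : E =>
      ((P (y : Y)).toReal / pE) * Real.log ((P (y : Y)).toReal / (Q (y : Y)).toReal)) := by
    apply Summable.of_norm_bounded (g := fun y : E => ((P (y : Y)).toReal / pE) * (2 * ε))
      (hPsumE.div_const pE |>.mul_right (2 * ε))
    intro y
    rw [Real.norm_eq_abs, abs_mul]
    have h1 : 0 ≤ (P (y : Y)).toReal / pE := by positivity
    rw [abs_of_nonneg h1]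
    exact mul_le_mul_of_nonneg_left (hlogbound y) h1
  have hsumB : Summable (fun y : E =>
      (Q (y : Y)).toReal * Real.log ((P (y : Y)).toReal / (Q (y : Y)).toReal)) := by
    apply Summable.of_norm_bounded (g := fun y : E => (Q (y : Y)).toReal * (2 * ε))
      (hQsumE.mul_right (2 * ε))
    intro y
    rw [Real.norm_eq_abs, abs_mul, abs_of_nonneg ENNReal.toReal_nonneg]
    exact mul_le_mul_of_nonneg_left (hlogbound y) ENNReal.toReal_nonneg
  -- total Q mass on E is at most 1
  have hQE1 : ∑' y : E, (Q (y : Y)).toReal ≤ 1 := by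
    have h1 : ∑' y : E, (Q (y : Y)).toReal = (∑' y : E, (Q (y : Y) : ENNReal)).toReal :=
      (ENNReal.tsum_toReal_eq (f := fun y : E => Q (y : Y)) (fun a => (Q.apply_lt_top _).ne)).symm
    rw [h1]
    have h2 : (∑' y : E, (Q (y : Y) : ENNReal)) ≤ 1 := by
      rw [tsum_subtype]
      calc ∑' x, E.indicator (⇑Q) x ≤ ∑' x, Q x :=
            ENNReal.tsum_le_tsum (fun x => Set.indicator_le_self E _ x)
        _ = 1 := Q.tsum_coe
    calc (∑' y : E, (Q (y : Y) : ENNReal)).toReal ≤ (1 : ENNReal).toReal :=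
        ENNReal.toReal_mono ENNReal.one_ne_top h2
      _ = 1 := by simp
  -- pointwise key inequality
  have key : ∀ y : E,
      ((P (y : Y)).toReal / pE) * Real.log ((P (y : Y)).toReal / (Q (y : Y)).toReal)
        ≤ (Q (y : Y)).toReal * Real.log ((P (y : Y)).toReal / (Q (y : Y)).toReal)
          + 2 * ε * C * (Q (y : Y)).toReal := by
    intro y
    set p := (P (y : Y)).toReal with hp
    set q := (Q (y : Y)).toReal with hq
    have hp0 : 0 ≤ p := by rw [hp]; exact ENNReal.toReal_nonneg
    have hq0 : 0 ≤ q := by rw [hq]; exact ENNReal.toReal_nonneg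
    set L := Real.log (p / q) with hL
    have hLb : |L| ≤ 2 * ε := by rw [hL, hp, hq]; exact hlogbound y
    clear_value p q L
    rcases eq_or_lt_of_le hq0 with hq0' | hqpos
    · -- q = 0 : L = log (p/0) = log 0 = 0
      have : L = 0 := by rw [hL, ← hq0', div_zero, Real.log_zero]
      rw [this, ← hq0']
      simp
    rcases eq_or_lt_of_le hp0 with hp0' | hppos
    · -- p = 0 : L = 0
      have : L = 0 := by rw [hL, ← hp0', zero_div, Real.log_zero]
      rw [this]
      simp
      positivity
    -- main case: p, q > 0
    have hratio : 0 < p / q := div_pos hppos hqpos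
    have hub : p ≤ Real.exp (2 * ε) * q := by
      have h1 : L ≤ 2 * ε := (abs_le.mp hLb).2
      have h2 : p / q ≤ Real.exp (2 * ε) := by
        calc p / q = Real.exp L := by rw [hL, Real.exp_log hratio]
          _ ≤ Real.exp (2 * ε) := Real.exp_le_exp.mpr h1
      calc p = (p / q) * q := by field_simp
        _ ≤ Real.exp (2 * ε) * q := mul_le_mul_of_nonneg_right h2 hq0
    have hlb : Real.exp (-(2 * ε)) * q ≤ p := by
      have h1 : -(2 * ε) ≤ L := (abs_le.mp hLb).1
      have h2 : Real.exp (-(2 * ε)) ≤ p / q := by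
        calc Real.exp (-(2 * ε)) ≤ Real.exp L := Real.exp_le_exp.mpr h1
          _ = p / q := by rw [hL, Real.exp_log hratio]
      calc Real.exp (-(2 * ε)) * q ≤ (p / q) * q := mul_le_mul_of_nonneg_right h2 hq0
        _ = p := by field_simp
    -- |p/pE - q| ≤ C * q
    have habs : |p / pE - q| ≤ C * q := by
      rw [abs_le]
      constructor
      · -- q - p/pE ≤ C q, i.e. -(C q) ≤ p/pE - q
        have h1 : p ≤ p / pE :=
          le_div_self hp0 hpE0 hpE1
        have h2 : q - p ≤ (1 - Real.exp (-(2 * ε))) * q := by nlinarith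
        have h3 : (1 - Real.exp (-(2 * ε))) * q ≤ C * q :=
          mul_le_mul_of_nonneg_right hC1 hq0
        linarith
      · have h1 : p / pE ≤ Real.exp (2 * ε) * q / (1 - d) := by
          apply div_le_div₀ (by positivity) hub hd1'
          exact hPE
        have h2 : Real.exp (2 * ε) * q / (1 - d) - q = C * q := by
          rw [hCdef]; field_simp
        linarith
    have := abs_mul (p / pE - q) L
    have hstep : (p / pE - q) * L ≤ 2 * ε * C * q := by
      calc (p / pE - q) * L ≤ |(p / pE - q) * L| := le_abs_self _
        _ = |p / pE - q| * |L| := abs_mul _ _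
        _ ≤ (C * q) * (2 * ε) := by
            apply mul_le_mul habs hLb (abs_nonneg _) (by positivity)
        _ = 2 * ε * C * q := by ring
    nlinarith [hstep]
  -- combine
  have hsumRHS : Summable (fun y : E =>
      (Q (y : Y)).toReal * Real.log ((P (y : Y)).toReal / (Q (y : Y)).toReal)
        + 2 * ε * C * (Q (y : Y)).toReal) :=
    hsumB.add (hQsumE.mul_left (2 * ε * C))
  calc ∑' y : E, ((P (y : Y)).toReal / pE) * Real.log ((P (y : Y)).toReal / (Q (y : Y)).toReal)
      ≤ ∑' y : E, ((Q (y : Y)).toReal * Real.log ((P (y : Y)).toReal / (Q (y : Y)).toReal)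
          + 2 * ε * C * (Q (y : Y)).toReal) := Summable.tsum_le_tsum key hsumA hsumRHS
    _ = (∑' y : E, (Q (y : Y)).toReal * Real.log ((P (y : Y)).toReal / (Q (y : Y)).toReal))
          + 2 * ε * C * ∑' y : E, (Q (y : Y)).toReal := by
        rw [Summable.tsum_add hsumB (hQsumE.mul_left (2 * ε * C)), tsum_mul_left]
    _ ≤ (∑' y : E, (Q (y : Y)).toReal * Real.log ((P (y : Y)).toReal / (Q (y : Y)).toReal))
          + 2 * ε * C := by
        have : 2 * ε * C * ∑' y : E, (Q (y : Y)).toReal ≤ 2 * ε * C * 1 :=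
          mul_le_mul_of_nonneg_left hQE1 (by positivity)
        linarith
end

section
/- Let (M_i)_{i=0}^k be a {0,1}-valued non-increasing adapted process with M₀ = 1, and let (X'_i)_{i=1}^k be {0,1}-valued predictable random variables (X'_i measurable w.r.t. the past before step i). Suppose E[M_i | F_{i−1}] ≤ M_{i−1}(1 − (p/2)·X'_i) for all i, for some p ∈ [0,1], and E[Σ_i X'_i] ≥ k/2. Then 1 − E[M_k] ≥ (pk/4)/(1 + pk/2). -/
open MeasureTheory Finset

/-- Telescoping supermartingale bound (adaptive lower bound, replicability case): if M is a
{0,1}-valued non-increasing adapted process with M₀ = 1, the X'_i are {0,1}-valued predictable,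
E[M_{i+1} | ℱ_i] ≤ M_i(1 − (p/2)X'_i), and E[Σ X'_i] ≥ k/2, then
1 − E[M_k] ≥ (pk/4)/(1 + pk/2). -/
theorem stmt_14 {Ω : Type*} {m0 : MeasurableSpace Ω} (μ : Measure Ω) [IsProbabilityMeasure μ]
    (ℱ : Filtration ℕ m0) (k : ℕ) (M : ℕ → Ω → ℝ) (X' : ℕ → Ω → ℝ)
    (p : ℝ) (hp0 : 0 ≤ p) (hp1 : p ≤ 1)
    (hM01 : ∀ i ω, M i ω = 0 ∨ M i ω = 1)
    (hM0 : ∀ ω, M 0 ω = 1)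
    (hmono : ∀ i ω, M (i + 1) ω ≤ M i ω)
    (hMadapted : ∀ i, StronglyMeasurable[ℱ i] (M i))
    (hX01 : ∀ i ω, X' i ω = 0 ∨ X' i ω = 1)
    (hXpred : ∀ i, StronglyMeasurable[ℱ i] (X' i))
    (hcond : ∀ i, μ[M (i + 1)|ℱ i] ≤ᵐ[μ] fun ω => M i ω * (1 - p / 2 * X' i ω))
    (hsum : (k : ℝ) / 2 ≤ ∫ ω, ∑ i ∈ range k, X' i ω ∂μ) :
    (p * k / 4) / (1 + p * k / 2) ≤ 1 - ∫ ω, M k ω ∂μ := by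
  have hM0' : ∀ i ω, 0 ≤ M i ω := fun i ω => by rcases hM01 i ω with h|h <;> simp [h]
  have hM1' : ∀ i ω, M i ω ≤ 1 := fun i ω => by rcases hM01 i ω with h|h <;> simp [h]
  have hX0' : ∀ i ω, 0 ≤ X' i ω := fun i ω => by rcases hX01 i ω with h|h <;> simp [h]
  have hX1' : ∀ i ω, X' i ω ≤ 1 := fun i ω => by rcases hX01 i ω with h|h <;> simp [h]
  have hMm : ∀ i, AEStronglyMeasurable (M i) μ :=
    fun i => ((hMadapted i).mono (ℱ.le i)).aestronglyMeasurable
  have hXm : ∀ i, AEStronglyMeasurable (X' i) μ :=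
    fun i => ((hXpred i).mono (ℱ.le i)).aestronglyMeasurable
  have hMint : ∀ i, Integrable (M i) μ := by
    intro i
    refine ⟨hMm i, ?_⟩
    apply (hasFiniteIntegral_const (1 : ℝ)).mono'
    filter_upwards with ω
    rw [Real.norm_eq_abs, abs_of_nonneg (hM0' i ω)]; exact hM1' i ω
  have hXint : ∀ i, Integrable (X' i) μ := by
    intro i
    refine ⟨hXm i, ?_⟩
    apply (hasFiniteIntegral_const (1 : ℝ)).mono'
    filter_upwards with ω
    rw [Real.norm_eq_abs, abs_of_nonneg (hX0' i ω)]; exact hX1' i ω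
  have hMXint : ∀ i j, Integrable (fun ω => M i ω * X' j ω) μ := by
    intro i j
    refine ⟨(hMm i).mul (hXm j), ?_⟩
    apply (hasFiniteIntegral_const (1 : ℝ)).mono'
    filter_upwards with ω
    rw [Real.norm_eq_abs, abs_of_nonneg (mul_nonneg (hM0' i ω) (hX0' j ω))]
    exact mul_le_one₀ (hM1' i ω) (hX0' j ω) (hX1' j ω)
  have hmono' : ∀ i, i ≤ k → ∀ ω, M k ω ≤ M i ω := fun i hik ω =>
    (antitone_nat_of_succ_le (f := fun n => M n ω) (fun n => hmono n ω)) hik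
  -- step inequality
  have hstep : ∀ i, i ≤ k →
      ∫ ω, M (i + 1) ω ∂μ ≤ (∫ ω, M i ω ∂μ) - p / 2 * ∫ ω, M k ω * X' i ω ∂μ := by
    intro i hik
    have h1 : ∫ ω, M (i + 1) ω ∂μ ≤ ∫ ω, M i ω * (1 - p / 2 * X' i ω) ∂μ := by
      rw [← integral_condExp (ℱ.le i)]
      refine integral_mono_ae integrable_condExp ?_ (hcond i)
      have : Integrable (fun ω => M i ω - p / 2 * (M i ω * X' i ω)) μ :=
        (hMint i).sub (((hMXint i i)).const_mul (p / 2))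
      refine this.congr ?_
      filter_upwards with ω; ring
    have h2 : ∫ ω, M i ω * (1 - p / 2 * X' i ω) ∂μ ≤
        ∫ ω, M i ω - p / 2 * (M k ω * X' i ω) ∂μ := by
      refine integral_mono ?_ ((hMint i).sub (((hMXint k i)).const_mul (p / 2))) ?_
      · refine ((hMint i).sub (((hMXint i i)).const_mul (p / 2))).congr ?_
        filter_upwards with ω; simp only [Pi.sub_apply]; ring
      · intro ω
        have := hmono' i hik ω
        have h3 : M k ω * X' i ω ≤ M i ω * X' i ω :=
          mul_le_mul_of_nonneg_right this (hX0' i ω)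
        nlinarith [hX0' i ω]
    have h4 : ∫ ω, M i ω - p / 2 * (M k ω * X' i ω) ∂μ =
        (∫ ω, M i ω ∂μ) - p / 2 * ∫ ω, M k ω * X' i ω ∂μ := by
      rw [integral_sub (hMint i) (((hMXint k i)).const_mul (p / 2)), integral_const_mul]
    linarith
  -- telescoping sum
  set S : ℝ := ∑ i ∈ range k, ∫ ω, M k ω * X' i ω ∂μ with hS
  have htel : p / 2 * S ≤ 1 - ∫ ω, M k ω ∂μ := by
    have h5 : ∑ i ∈ range k, ((∫ ω, M i ω ∂μ) - ∫ ω, M (i + 1) ω ∂μ) =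
        (∫ ω, M 0 ω ∂μ) - ∫ ω, M k ω ∂μ := Finset.sum_range_sub' _ _
    have h6 : ∀ i ∈ range k, p / 2 * ∫ ω, M k ω * X' i ω ∂μ ≤
        (∫ ω, M i ω ∂μ) - ∫ ω, M (i + 1) ω ∂μ := by
      intro i hi
      have := hstep i (Nat.le_of_lt (mem_range.mp hi))
      linarith
    have h7 := Finset.sum_le_sum h6
    rw [h5] at h7
    have h8 : ∫ ω, M 0 ω ∂μ = 1 := by
      simp only [hM0]; simp
    rw [h8] at h7
    calc p / 2 * S = ∑ i ∈ range k, p / 2 * ∫ ω, M k ω * X' i ω ∂μ := by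
          rw [hS, Finset.mul_sum]
      _ ≤ _ := h7
  -- lower bound on S
  have hSlow : (k : ℝ) / 2 - k * (1 - ∫ ω, M k ω ∂μ) ≤ S := by
    have hYint : Integrable (fun ω => ∑ i ∈ range k, X' i ω) μ :=
      integrable_finset_sum _ (fun i _ => hXint i)
    have hMYint : Integrable (fun ω => ∑ i ∈ range k, M k ω * X' i ω) μ :=
      integrable_finset_sum _ (fun i _ => hMXint k i)
    have hSint : S = ∫ ω, ∑ i ∈ range k, M k ω * X' i ω ∂μ := by
      rw [hS, ← integral_finset_sum _ (fun i _ => hMXint k i)]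
    have hdiff : ∫ ω, (∑ i ∈ range k, X' i ω) - ∑ i ∈ range k, M k ω * X' i ω ∂μ ≤
        ∫ ω, (k : ℝ) * (1 - M k ω) ∂μ := by
      refine integral_mono (hYint.sub hMYint)
        ((integrable_const (1:ℝ)).sub (hMint k) |>.const_mul ((k:ℝ))) ?_
      intro ω
      rcases hM01 k ω with h|h
      · have hsum1 : ∑ i ∈ range k, X' i ω ≤ (k : ℝ) := by
          calc ∑ i ∈ range k, X' i ω ≤ ∑ i ∈ range k, (1:ℝ) :=
                Finset.sum_le_sum (fun i _ => hX1' i ω)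
            _ = k := by simp
        simp only [h, zero_mul, Finset.sum_const_zero, sub_zero, mul_one]
        linarith
      · simp [h]
    have hconst : ∫ ω, (k : ℝ) * (1 - M k ω) ∂μ = k * (1 - ∫ ω, M k ω ∂μ) := by
      rw [integral_const_mul, integral_sub (integrable_const _) (hMint k)]
      simp
    have hsub : ∫ ω, (∑ i ∈ range k, X' i ω) - ∑ i ∈ range k, M k ω * X' i ω ∂μ =
        (∫ ω, ∑ i ∈ range k, X' i ω ∂μ) - ∫ ω, ∑ i ∈ range k, M k ω * X' i ω ∂μ :=
      integral_sub hYint hMYint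
    rw [hsub, hconst] at hdiff
    rw [hSint]
    linarith
  -- conclude
  have ht0 : 0 ≤ 1 - ∫ ω, M k ω ∂μ := by
    have : ∫ ω, M k ω ∂μ ≤ ∫ ω, (1:ℝ) ∂μ :=
      integral_mono (hMint k) (integrable_const _) (hM1' k)
    simp at this; linarith
  have hk0 : (0:ℝ) ≤ k := Nat.cast_nonneg k
  have hden : 0 < 1 + p * k / 2 := by positivity
  rw [div_le_iff₀ hden]
  nlinarith [mul_le_mul_of_nonneg_left hSlow (by positivity : (0:ℝ) ≤ p / 2)]
end

section
/- Let (N_i)_{i=0}^k be a {0,1}-valued non-increasing adapted process with N₀ = 1, and let (Z_i)_{i=1}^k be {0,1}-valued predictable random variables with E[Σ_i Z_i] ≥ k/2. Suppose E[N_i | F_{i−1}] ≤ N_{i−1}(1 − (1/16)·Z_i) for all i. Then 1 − E[N_k] ≥ (k/32)/(1 + k/16). -/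
open MeasureTheory Finset

/-- Telescoping supermartingale bound (adaptive lower bound, replicability case): if M is a
{0,1}-valued non-increasing adapted process with M₀ = 1, the X'_i are {0,1}-valued predictable,
E[M_{i+1} | ℱ_i] ≤ M_i(1 − (1/16)·Z'_i), and E[Σ X'_i] ≥ k/2, then
1 − E[M_k] ≥ (k/32)/(1 + k/16). -/
theorem stmt_15 {Ω : Type*} {m0 : MeasurableSpace Ω} (μ : Measure Ω) [IsProbabilityMeasure μ]
    (ℱ : Filtration ℕ m0) (k : ℕ) (M : ℕ → Ω → ℝ) (X' : ℕ → Ω → ℝ)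
    
    (hM01 : ∀ i ω, M i ω = 0 ∨ M i ω = 1)
    (hM0 : ∀ ω, M 0 ω = 1)
    (hmono : ∀ i ω, M (i + 1) ω ≤ M i ω)
    (hMadapted : ∀ i, StronglyMeasurable[ℱ i] (M i))
    (hX01 : ∀ i ω, X' i ω = 0 ∨ X' i ω = 1)
    (hXpred : ∀ i, StronglyMeasurable[ℱ i] (X' i))
    (hcond : ∀ i, μ[M (i + 1)|ℱ i] ≤ᵐ[μ] fun ω => M i ω * (1 - (1 / 16) * X' i ω))
    (hsum : (k : ℝ) / 2 ≤ ∫ ω, ∑ i ∈ range k, X' i ω ∂μ) :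
    ((k : ℝ) / 32) / (1 + k / 16) ≤ 1 - ∫ ω, M k ω ∂μ := by
  have hMm : ∀ i, StronglyMeasurable (M i) := fun i => (hMadapted i).mono (ℱ.le i)
  have hXm : ∀ i, StronglyMeasurable (X' i) := fun i => (hXpred i).mono (ℱ.le i)
  have hM0le : ∀ i ω, 0 ≤ M i ω := by
    intro i ω; rcases hM01 i ω with h | h <;> simp [h]
  have hMle1 : ∀ i ω, M i ω ≤ 1 := by
    intro i ω; rcases hM01 i ω with h | h <;> simp [h]
  have hX0le : ∀ i ω, 0 ≤ X' i ω := by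
    intro i ω; rcases hX01 i ω with h | h <;> simp [h]
  have hXle1 : ∀ i ω, X' i ω ≤ 1 := by
    intro i ω; rcases hX01 i ω with h | h <;> simp [h]
  have hMint : ∀ i, Integrable (M i) μ := by
    intro i
    refine Integrable.mono' (integrable_const 1) (hMm i).aestronglyMeasurable ?_
    filter_upwards with ω
    rw [Real.norm_eq_abs, abs_of_nonneg (hM0le i ω)]; exact hMle1 i ω
  have hXint : ∀ i, Integrable (X' i) μ := by
    intro i
    refine Integrable.mono' (integrable_const 1) (hXm i).aestronglyMeasurable ?_
    filter_upwards with ω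
    rw [Real.norm_eq_abs, abs_of_nonneg (hX0le i ω)]; exact hXle1 i ω
  have hMXint : ∀ i j, Integrable (fun ω => M i ω * X' j ω) μ := by
    intro i j
    refine Integrable.mono' (integrable_const 1) ((hMm i).mul (hXm j)).aestronglyMeasurable ?_
    filter_upwards with ω
    rw [Real.norm_eq_abs, abs_of_nonneg (mul_nonneg (hM0le i ω) (hX0le j ω))]
    calc M i ω * X' j ω ≤ 1 * 1 :=
          mul_le_mul (hMle1 i ω) (hXle1 j ω) (hX0le j ω) zero_le_one
      _ = 1 := by ring
  -- monotonicity over arbitrary indices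
  have hle : ∀ i j, i ≤ j → ∀ ω, M j ω ≤ M i ω := by
    intro i j hij ω
    induction j with
    | zero => simp_all
    | succ n ih =>
      rcases Nat.lt_or_ge i (n + 1) with h | h
      · exact le_trans (hmono n ω) (ih (Nat.lt_succ_iff.mp h))
      · have : i = n + 1 := le_antisymm hij h
        simp [this]
  -- step inequality
  have hstep : ∀ i, i < k →
      (1 / 16 : ℝ) * ∫ ω, M k ω * X' i ω ∂μ ≤ (∫ ω, M i ω ∂μ) - ∫ ω, M (i + 1) ω ∂μ := by
    intro i hi
    have h1 : ∫ ω, M (i + 1) ω ∂μ ≤ ∫ ω, M i ω * (1 - (1 / 16) * X' i ω) ∂μ := by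
      have := integral_condExp (μ := μ) (f := M (i + 1)) (ℱ.le i)
      rw [← this]
      refine integral_mono_ae integrable_condExp ?_ (hcond i)
      have : (fun ω => M i ω * (1 - (1 / 16) * X' i ω)) =
          fun ω => M i ω - (1 / 16) * (M i ω * X' i ω) := by
        funext ω; ring
      rw [this]
      exact (hMint i).sub ((hMXint i i).const_mul _)
    have h2 : ∫ ω, M i ω * (1 - (1 / 16) * X' i ω) ∂μ =
        (∫ ω, M i ω ∂μ) - (1 / 16) * ∫ ω, M i ω * X' i ω ∂μ := by
      have : (fun ω => M i ω * (1 - (1 / 16) * X' i ω)) =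
          fun ω => M i ω - (1 / 16) * (M i ω * X' i ω) := by
        funext ω; ring
      rw [this, integral_sub (hMint i) ((hMXint i i).const_mul _), integral_const_mul]
    have h3 : ∫ ω, M k ω * X' i ω ∂μ ≤ ∫ ω, M i ω * X' i ω ∂μ := by
      refine integral_mono (hMXint k i) (hMXint i i) fun ω => ?_
      exact mul_le_mul_of_nonneg_right (hle i k (le_of_lt hi) ω) (hX0le i ω)
    rw [h2] at h1
    linarith
  -- telescoping
  have htel : (1 / 16 : ℝ) * ∑ i ∈ range k, ∫ ω, M k ω * X' i ω ∂μ ≤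
      1 - ∫ ω, M k ω ∂μ := by
    have hM0int : ∫ ω, M 0 ω ∂μ = 1 := by
      simp [hM0]
    have hsum' : ∑ i ∈ range k, ((∫ ω, M i ω ∂μ) - ∫ ω, M (i + 1) ω ∂μ) =
        (∫ ω, M 0 ω ∂μ) - ∫ ω, M k ω ∂μ := by
      rw [Finset.sum_range_sub' (fun i => ∫ ω, M i ω ∂μ)]
    calc (1 / 16 : ℝ) * ∑ i ∈ range k, ∫ ω, M k ω * X' i ω ∂μ
        = ∑ i ∈ range k, (1 / 16 : ℝ) * ∫ ω, M k ω * X' i ω ∂μ := by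
          rw [Finset.mul_sum]
      _ ≤ ∑ i ∈ range k, ((∫ ω, M i ω ∂μ) - ∫ ω, M (i + 1) ω ∂μ) := by
          refine Finset.sum_le_sum fun i hi => hstep i (Finset.mem_range.mp hi)
      _ = 1 - ∫ ω, M k ω ∂μ := by rw [hsum', hM0int]
  -- pointwise bound on the sum
  have hpw : ∀ ω, ∑ i ∈ range k, X' i ω ≤
      (∑ i ∈ range k, M k ω * X' i ω) + k * (1 - M k ω) := by
    intro ω
    rcases hM01 k ω with h | h
    · simp only [h, zero_mul, Finset.sum_const_zero, sub_zero, mul_one, zero_add]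
      calc ∑ i ∈ range k, X' i ω ≤ ∑ i ∈ range k, (1 : ℝ) :=
            Finset.sum_le_sum fun i _ => hXle1 i ω
        _ = k := by simp
    · simp [h]
  -- integrate the pointwise bound
  have hintsum : Integrable (fun ω => ∑ i ∈ range k, X' i ω) μ :=
    integrable_finset_sum _ fun i _ => hXint i
  have hintsum2 : Integrable (fun ω => ∑ i ∈ range k, M k ω * X' i ω) μ :=
    integrable_finset_sum _ fun i _ => hMXint k i
  have hint2 : ∫ ω, ∑ i ∈ range k, X' i ω ∂μ ≤
      (∑ i ∈ range k, ∫ ω, M k ω * X' i ω ∂μ) + k * (1 - ∫ ω, M k ω ∂μ) := by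
    have : ∫ ω, ∑ i ∈ range k, X' i ω ∂μ ≤
        ∫ ω, ((∑ i ∈ range k, M k ω * X' i ω) + k * (1 - M k ω)) ∂μ := by
      refine integral_mono hintsum ?_ hpw
      exact hintsum2.add ((show Integrable (fun ω => (1:ℝ) - M k ω) μ from (integrable_const 1).sub (hMint k)).const_mul _)
    calc ∫ ω, ∑ i ∈ range k, X' i ω ∂μ
        ≤ ∫ ω, ((∑ i ∈ range k, M k ω * X' i ω) + k * (1 - M k ω)) ∂μ := this
      _ = (∑ i ∈ range k, ∫ ω, M k ω * X' i ω ∂μ) + k * (1 - ∫ ω, M k ω ∂μ) := by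
          rw [integral_add hintsum2 ((show Integrable (fun ω => (1:ℝ) - M k ω) μ from (integrable_const 1).sub (hMint k)).const_mul _),
            integral_finset_sum _ fun i _ => hMXint k i, integral_const_mul,
            integral_sub (integrable_const 1) (hMint k)]
          simp
  -- combine
  set t : ℝ := 1 - ∫ ω, M k ω ∂μ with ht
  clear_value t
  have key : (k : ℝ) / 2 ≤ 16 * t + k * t := by
    have h16 : ∑ i ∈ range k, ∫ ω, M k ω * X' i ω ∂μ ≤ 16 * t := by linarith [htel]
    linarith [hsum, hint2, h16]
  have hkpos : (0 : ℝ) < 1 + (k : ℝ) / 16 := by positivity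
  rw [div_le_iff₀ hkpos]
  nlinarith [key]
end
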